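/- arXiv:1310.6534 — 4 statements merged into one kernel-verified Lean document; each statement's English description precedes it below -/
import Mathlib

section
/- If K is an unconditional planar convex body (symmetric with respect to two perpendicular axis-parallel lines through a point z), then its diameter equals twice its circumradius: D(K) = 2R(K). -/
open MeasureTheory Metric Set Filter
open scoped Topology RealInnerProductSpace

noncomputable def perim (K : Set (EuclideanSpace ℝ (Fin 2))) : ℝ :=
  (μH[1] (frontier K)).toReal

noncomputable def circum (K : Set (EuclideanSpace ℝ (Fin 2))) : ℝ :=
  sInf {r : ℝ | ∃ c, K ⊆ Metric.closedBall c r}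

noncomputable def inrad (K : Set (EuclideanSpace ℝ (Fin 2))) : ℝ :=
  sSup {r : ℝ | ∃ c, Metric.closedBall c r ⊆ K}

noncomputable def minWidth (K : Set (EuclideanSpace ℝ (Fin 2))) : ℝ :=
  sInf {w : ℝ | ∃ u : EuclideanSpace ℝ (Fin 2), ‖u‖ = 1 ∧
    w = sSup ((fun x => ⟪u, x⟫) '' K) - sInf ((fun x => ⟪u, x⟫) '' K)}

def LatticeFree (K : Set (EuclideanSpace ℝ (Fin 2))) : Prop :=
  ∀ m n : ℤ, (!₂[(m : ℝ), (n : ℝ)] : EuclideanSpace ℝ (Fin 2)) ∉ interior K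

def Unconditional (K : Set (EuclideanSpace ℝ (Fin 2))) (z : EuclideanSpace ℝ (Fin 2)) : Prop :=
  (∀ x ∈ K, (!₂[x 0, 2 * z 1 - x 1] : EuclideanSpace ℝ (Fin 2)) ∈ K) ∧
  (∀ x ∈ K, (!₂[2 * z 0 - x 0, x 1] : EuclideanSpace ℝ (Fin 2)) ∈ K)

theorem stmt_1 (K : Set (EuclideanSpace ℝ (Fin 2))) (z : EuclideanSpace ℝ (Fin 2))
    (hK : IsCompact K) (hconv : Convex ℝ K) (hne : (interior K).Nonempty)
    (hunc : Unconditional K z) :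
    Metric.diam K = 2 * circum K := by
  have hKne : K.Nonempty := hne.mono interior_subset
  -- central symmetry
  have hrefl : ∀ x ∈ K, ((2:ℝ) • z - x) ∈ K := by
    intro x hx
    have h1 := hunc.1 x hx
    have h2 := hunc.2 _ h1
    have heq : (!₂[2 * z 0 - (!₂[x 0, 2 * z 1 - x 1] : EuclideanSpace ℝ (Fin 2)) 0,
        (!₂[x 0, 2 * z 1 - x 1] : EuclideanSpace ℝ (Fin 2)) 1] : EuclideanSpace ℝ (Fin 2))
        = (2:ℝ) • z - x := by
      ext i
      fin_cases i <;>
        simp [Matrix.cons_val_zero, Matrix.cons_val_one, Matrix.head_cons, PiLp.sub_apply, PiLp.smul_apply, smul_eq_mul] <;> ring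
    rwa [heq] at h2
  have hdist : ∀ x ∈ K, dist x z ≤ Metric.diam K / 2 := by
    intro x hx
    have h2 : dist x ((2:ℝ) • z - x) = 2 * dist x z := by
      rw [dist_eq_norm, dist_eq_norm]
      have : x - ((2:ℝ) • z - x) = (2 : ℝ) • (x - z) := by
        rw [two_smul, two_smul]; abel
      rw [this, norm_smul]
      simp
    have h3 : dist x ((2:ℝ) • z - x) ≤ Metric.diam K :=
      Metric.dist_le_diam_of_mem hK.isBounded hx (hrefl x hx)
    linarith [h2 ▸ h3]
  have hsubz : K ⊆ Metric.closedBall z (Metric.diam K / 2) := fun x hx =>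
    Metric.mem_closedBall.2 (hdist x hx)
  have hSne : {r : ℝ | ∃ c, K ⊆ Metric.closedBall c r}.Nonempty :=
    ⟨Metric.diam K / 2, z, hsubz⟩
  have hbdd : BddBelow {r : ℝ | ∃ c, K ⊆ Metric.closedBall c r} := by
    refine ⟨0, fun r hr => ?_⟩
    obtain ⟨c, hc⟩ := hr
    obtain ⟨x, hx⟩ := hKne
    exact le_trans dist_nonneg (Metric.mem_closedBall.1 (hc hx))
  have h1 : circum K ≤ Metric.diam K / 2 := csInf_le hbdd ⟨z, hsubz⟩
  have h2 : Metric.diam K / 2 ≤ circum K := by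
    apply le_csInf hSne
    rintro r ⟨c, hc⟩
    obtain ⟨x, hx⟩ := hKne
    have hr0 : 0 ≤ r := le_trans dist_nonneg (Metric.mem_closedBall.1 (hc hx))
    have : Metric.diam K ≤ 2 * r := by
      apply Metric.diam_le_of_forall_dist_le (by linarith)
      intro a ha b hb
      calc dist a b ≤ dist a c + dist c b := dist_triangle a c b
        _ ≤ r + r := add_le_add (Metric.mem_closedBall.1 (hc ha))
            (by rw [dist_comm]; exact Metric.mem_closedBall.1 (hc hb))
        _ = 2 * r := by ring
    linarith
  linarith
end

section
/- For any triangle T in the plane, the minimal width satisfies ω(T) ≤ (√3/2) D(T), with equality exactly for equilateral triangles. -/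
open MeasureTheory Metric Set Filter
open scoped Topology RealInnerProductSpace

/- ### Auxiliary machinery -/

section Aux

abbrev E2 := EuclideanSpace ℝ (Fin 2)

/- coordinate lemmas -/

lemma inner_coord (u x : E2) : ⟪u, x⟫ = u 0 * x 0 + u 1 * x 1 := by
  simp [PiLp.inner_apply, RCLike.inner_apply, Fin.sum_univ_two, mul_comm]

lemma norm_coord (u : E2) : ‖u‖ = Real.sqrt (u 0 ^ 2 + u 1 ^ 2) := by
  rw [EuclideanSpace.norm_eq]; simp [Fin.sum_univ_two, sq]

lemma dist_sq (x y : E2) : dist x y ^ 2 = (x 0 - y 0) ^ 2 + (x 1 - y 1) ^ 2 := by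
  rw [EuclideanSpace.dist_eq]
  rw [Real.sq_sqrt (by positivity)]
  simp [Fin.sum_univ_two, Real.dist_eq, sq_abs]

/- square-comparison helpers -/

lemma le_of_sq {x y : ℝ} (hx : 0 ≤ x) (hy : 0 ≤ y) (h : x^2 ≤ y^2) : x ≤ y := by
  nlinarith [sq_nonneg (x-y), sq_nonneg (x+y)]

lemma lt_of_sq {x y : ℝ} (hx : 0 ≤ x) (hy : 0 ≤ y) (h : x^2 < y^2) : x < y := by
  nlinarith [sq_nonneg (x-y), sq_nonneg (x+y)]

lemma eq_of_sq {x y : ℝ} (hx : 0 ≤ x) (hy : 0 ≤ y) (h : x^2 = y^2) : x = y := by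
  nlinarith [sq_nonneg (x-y), sq_nonneg (x+y)]

lemma sqrt3_sq (d : ℝ) : (Real.sqrt 3 / 2 * d)^2 = 3/4 * d^2 := by
  rw [mul_pow, div_pow, Real.sq_sqrt (by norm_num : (0:ℝ) ≤ 3)]
  ring

/- sSup/sInf over the hull of three points -/

lemma hull3_subset_Iic (a b c : ℝ) : convexHull ℝ {a,b,c} ⊆ Iic (max a (max b c)) := by
  apply convexHull_min _ (convex_Iic _)
  intro x hx
  rcases hx with h | h | h <;> simp_all [le_max_iff]

lemma hull3_subset_Ici (a b c : ℝ) : convexHull ℝ {a,b,c} ⊆ Ici (min a (min b c)) := by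
  apply convexHull_min _ (convex_Ici _)
  intro x hx
  rcases hx with h | h | h <;> simp_all [min_le_iff]

lemma max3_mem (a b c : ℝ) : max a (max b c) ∈ ({a,b,c} : Set ℝ) := by
  rcases le_total b c with h | h
  · rw [max_eq_right h]
    rcases le_total a c with h2 | h2
    · rw [max_eq_right h2]; simp
    · rw [max_eq_left h2]; simp
  · rw [max_eq_left h]
    rcases le_total a b with h2 | h2
    · rw [max_eq_right h2]; simp
    · rw [max_eq_left h2]; simp

lemma min3_mem (a b c : ℝ) : min a (min b c) ∈ ({a,b,c} : Set ℝ) := by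
  rcases le_total b c with h | h
  · rw [min_eq_left h]
    rcases le_total a b with h2 | h2
    · rw [min_eq_left h2]; simp
    · rw [min_eq_right h2]; simp
  · rw [min_eq_right h]
    rcases le_total a c with h2 | h2
    · rw [min_eq_left h2]; simp
    · rw [min_eq_right h2]; simp

lemma sSup_hull3 (a b c : ℝ) : sSup (convexHull ℝ {a,b,c}) = max a (max b c) := by
  apply le_antisymm
  · exact csSup_le ⟨a, subset_convexHull ℝ _ (by simp)⟩ (fun x hx => hull3_subset_Iic a b c hx)
  · exact le_csSup ⟨_, fun x hx => hull3_subset_Iic a b c hx⟩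
      (subset_convexHull ℝ _ (max3_mem a b c))

lemma sInf_hull3 (a b c : ℝ) : sInf (convexHull ℝ {a,b,c}) = min a (min b c) := by
  apply le_antisymm
  · exact csInf_le ⟨_, fun x hx => hull3_subset_Ici a b c hx⟩
      (subset_convexHull ℝ _ (min3_mem a b c))
  · exact le_csInf ⟨a, subset_convexHull ℝ _ (by simp)⟩ (fun x hx => hull3_subset_Ici a b c hx)

lemma image_hull3 (u p q s : E2) :
    (fun x : E2 => ⟪u, x⟫) '' convexHull ℝ {p, q, s} = convexHull ℝ {⟪u,p⟫, ⟪u,q⟫, ⟪u,s⟫} := by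
  have hlin : IsLinearMap ℝ (fun x : E2 => ⟪u, x⟫) :=
    ⟨fun x y => inner_add_right u x y, fun c x => real_inner_smul_right u x c⟩
  rw [hlin.image_convexHull]
  congr 1
  simp [Set.image_insert_eq]

/- the width functional in a fixed direction, evaluated on a triangle -/

noncomputable def W3 (u p q s : E2) : ℝ :=
  max ⟪u,p⟫ (max ⟪u,q⟫ ⟪u,s⟫) - min ⟪u,p⟫ (min ⟪u,q⟫ ⟪u,s⟫)

lemma W3_nonneg (u p q s : E2) : 0 ≤ W3 u p q s := by
  have h1 : min ⟪u,p⟫ (min ⟪u,q⟫ ⟪u,s⟫) ≤ ⟪u,p⟫ := min_le_left _ _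
  have h2 : ⟪u,p⟫ ≤ max ⟪u,p⟫ (max ⟪u,q⟫ ⟪u,s⟫) := le_max_left _ _
  simp only [W3]; linarith

lemma W3_perm1 (u p q s : E2) : W3 u q s p = W3 u p q s := by
  simp [W3, max_comm, max_left_comm, min_comm, min_left_comm]

lemma W3_perm2 (u p q s : E2) : W3 u p s q = W3 u p q s := by
  simp [W3, max_comm, max_left_comm, min_comm, min_left_comm]

lemma abs_le_W3_pq (u p q s : E2) : |⟪u,q⟫ - ⟪u,p⟫| ≤ W3 u p q s := by
  have h1 : min ⟪u,p⟫ (min ⟪u,q⟫ ⟪u,s⟫) ≤ ⟪u,p⟫ := min_le_left _ _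
  have h2 : ⟪u,p⟫ ≤ max ⟪u,p⟫ (max ⟪u,q⟫ ⟪u,s⟫) := le_max_left _ _
  have h3 : min ⟪u,p⟫ (min ⟪u,q⟫ ⟪u,s⟫) ≤ ⟪u,q⟫ := le_trans (min_le_right _ _) (min_le_left _ _)
  have h4 : ⟪u,q⟫ ≤ max ⟪u,p⟫ (max ⟪u,q⟫ ⟪u,s⟫) := le_trans (le_max_left _ _) (le_max_right _ _)
  rw [abs_sub_le_iff]; constructor <;> (simp only [W3]; linarith)

lemma abs_le_W3_qs (u p q s : E2) : |⟪u,s⟫ - ⟪u,q⟫| ≤ W3 u p q s := by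
  have h3 : min ⟪u,p⟫ (min ⟪u,q⟫ ⟪u,s⟫) ≤ ⟪u,q⟫ := le_trans (min_le_right _ _) (min_le_left _ _)
  have h4 : ⟪u,q⟫ ≤ max ⟪u,p⟫ (max ⟪u,q⟫ ⟪u,s⟫) := le_trans (le_max_left _ _) (le_max_right _ _)
  have h5 : min ⟪u,p⟫ (min ⟪u,q⟫ ⟪u,s⟫) ≤ ⟪u,s⟫ := le_trans (min_le_right _ _) (min_le_right _ _)
  have h6 : ⟪u,s⟫ ≤ max ⟪u,p⟫ (max ⟪u,q⟫ ⟪u,s⟫) := le_trans (le_max_right _ _) (le_max_right _ _)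
  rw [abs_sub_le_iff]; constructor <;> (simp only [W3]; linarith)

lemma abs_le_W3_ps (u p q s : E2) : |⟪u,p⟫ - ⟪u,s⟫| ≤ W3 u p q s := by
  have h1 : min ⟪u,p⟫ (min ⟪u,q⟫ ⟪u,s⟫) ≤ ⟪u,p⟫ := min_le_left _ _
  have h2 : ⟪u,p⟫ ≤ max ⟪u,p⟫ (max ⟪u,q⟫ ⟪u,s⟫) := le_max_left _ _
  have h5 : min ⟪u,p⟫ (min ⟪u,q⟫ ⟪u,s⟫) ≤ ⟪u,s⟫ := le_trans (min_le_right _ _) (min_le_right _ _)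
  have h6 : ⟪u,s⟫ ≤ max ⟪u,p⟫ (max ⟪u,q⟫ ⟪u,s⟫) := le_trans (le_max_right _ _) (le_max_right _ _)
  rw [abs_sub_le_iff]; constructor <;> (simp only [W3]; linarith)

lemma mm (x r : ℝ) : max x (max x (x+r)) - min x (min x (x+r)) = |r| := by
  rcases le_total 0 r with h | h
  · rw [max_eq_right (le_add_of_nonneg_right h), max_eq_right (le_add_of_nonneg_right h),
      min_eq_left (le_add_of_nonneg_right h), min_eq_left (le_refl x), abs_of_nonneg h]
    ring
  · rw [max_eq_left (by linarith : x + r ≤ x), max_self,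
      min_eq_right (by linarith : x + r ≤ x), min_eq_right (by linarith : x + r ≤ x),
      abs_of_nonpos h]
    ring

lemma W3_of_eq (u p q s : E2) (h : ⟪u,q⟫ = ⟪u,p⟫) :
    W3 u p q s = |⟪u,s⟫ - ⟪u,p⟫| := by
  have hs : ⟪u,s⟫ = ⟪u,p⟫ + (⟪u,s⟫ - ⟪u,p⟫) := by ring
  rw [W3, h, hs, mm]
  congr 1
  ring

/- pure real inequalities -/

lemma pairlem {x y N : ℝ} (hxy : 0 ≤ x*y) (hx : N/4 < x^2) (hy : N/4 < y^2)
    (hs : (x+y)^2 ≤ N) : False := by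
  nlinarith [sq_nonneg (x-y), sq_nonneg (x+y), mul_self_nonneg (x*y - N/4)]

set_option maxHeartbeats 1000000 in
lemma maxsq {c1 c2 c3 d1 d2 d3 N : ℝ} (hc : c1+c2+c3 = 0) (hd : d1+d2+d3 = 0)
    (e1 : c1^2+d1^2 = N) (e2 : c2^2+d2^2 = N) (e3 : c3^2+d3^2 = N) :
    3/4*N ≤ max (c1^2) (max (c2^2) (c3^2)) := by
  by_contra h
  push_neg at h
  have h1 : c1^2 < 3/4*N := lt_of_le_of_lt (le_max_left _ _) h
  have h2 : c2^2 < 3/4*N := lt_of_le_of_lt (le_trans (le_max_left _ _) (le_max_right _ _)) h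
  have h3 : c3^2 < 3/4*N := lt_of_le_of_lt (le_trans (le_max_right _ _) (le_max_right _ _)) h
  have hd1 : N/4 < d1^2 := by nlinarith
  have hd2 : N/4 < d2^2 := by nlinarith
  have hd3 : N/4 < d3^2 := by nlinarith
  have s3 : (d1+d2)^2 = d3^2 := by rw [show d1+d2 = -d3 by linarith]; ring
  have s2 : (d1+d3)^2 = d2^2 := by rw [show d1+d3 = -d2 by linarith]; ring
  have s1 : (d2+d3)^2 = d1^2 := by rw [show d2+d3 = -d1 by linarith]; ring
  rcases le_or_gt 0 (d1*d2) with hp | hp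
  · exact pairlem hp hd1 hd2 (by nlinarith [sq_nonneg c3])
  rcases le_or_gt 0 (d1*d3) with hp2 | hp2
  · exact pairlem hp2 hd1 hd3 (by nlinarith [sq_nonneg c2])
  have hp3 : 0 ≤ d2*d3 := by
    by_contra h'
    push_neg at h'
    nlinarith [mul_pos_of_neg_of_neg hp hp2, mul_pos_of_neg_of_neg hp h',
      mul_pos_of_neg_of_neg hp2 h']
  exact pairlem hp3 hd2 hd3 (by nlinarith [sq_nonneg c1])

lemma coreIneq {A B t : ℝ} (hA : 0 < A) (hB0 : 0 ≤ B) (hBA : B ≤ A) (hC : A + B - 2*t ≤ A) :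
    A*B - t^2 ≤ 3/4*A^2 := by
  nlinarith [sq_nonneg (2*t - B),
    mul_nonneg (by linarith : (0:ℝ) ≤ 3*A - B) (by linarith : (0:ℝ) ≤ A - B)]

lemma coreStrict {A B t : ℝ} (hA : 0 < A) (hB0 : 0 ≤ B) (hBA : B ≤ A) (hC : A + B - 2*t ≤ A)
    (hst : B < A ∨ A + B - 2*t < A) : A*B - t^2 < 3/4*A^2 := by
  rcases hst with h | h
  · nlinarith [sq_nonneg (2*t - B),
      mul_pos (by linarith : (0:ℝ) < 3*A - B) (by linarith : (0:ℝ) < A - B)]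
  · nlinarith [mul_pos (by linarith : (0:ℝ) < 2*t - B) (by linarith : (0:ℝ) < 2*t + B),
      mul_nonneg (by linarith : (0:ℝ) ≤ 3*A - B) (by linarith : (0:ℝ) ≤ A - B)]

lemma coreEq {A B t : ℝ} (hB : B = A) (hC : A + B - 2*t = A) :
    A*B - t^2 = 3/4*A^2 := by
  have ht : t = A/2 := by linarith
  subst ht hB
  ring

/- the unit normal to the longest side -/

set_option maxHeartbeats 1000000 in
lemma exists_u (p q s : E2) (hpq : p ≠ q) (h1 : dist p s ≤ dist p q)
    (h2 : dist q s ≤ dist p q) :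
    ∃ u : E2, ‖u‖ = 1 ∧ W3 u p q s ≤ Real.sqrt 3 / 2 * dist p q ∧
      ((dist p s < dist p q ∨ dist q s < dist p q) →
        W3 u p q s < Real.sqrt 3 / 2 * dist p q) ∧
      (dist p s = dist p q ∧ dist q s = dist p q →
        W3 u p q s = Real.sqrt 3 / 2 * dist p q) := by
  set a0 := q 0 - p 0 with ha0
  set a1 := q 1 - p 1 with ha1
  set b0 := s 0 - p 0 with hb0
  set b1 := s 1 - p 1 with hb1
  have hn : 0 < dist p q := dist_pos.mpr hpq
  set n := dist p q with hdn
  have hn0 : n ≠ 0 := ne_of_gt hn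
  have hA : n^2 = a0^2 + a1^2 := by rw [hdn, dist_comm, dist_sq]
  have hB : (dist p s)^2 = b0^2 + b1^2 := by rw [dist_comm, dist_sq]
  have hC : (dist q s)^2 = (b0-a0)^2 + (b1-a1)^2 := by
    rw [dist_comm, dist_sq, hb0, ha0, hb1, ha1]; ring
  set u : E2 := (!₂[-a1/n, a0/n] : E2) with hudef
  have hu : ‖u‖ = 1 := by
    rw [norm_coord]
    have : (u 0)^2 + (u 1)^2 = 1 := by
      show (-a1/n)^2 + (a0/n)^2 = 1
      field_simp
      nlinarith [hA]
    rw [this, Real.sqrt_one]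
  have hcq : ⟪u,q⟫ = ⟪u,p⟫ := by
    rw [inner_coord, inner_coord]
    show -a1/n * q 0 + a0/n * q 1 = -a1/n * p 0 + a0/n * p 1
    field_simp
    rw [ha0, ha1]; ring
  -- key quadratic identity
  set A := n^2 with hAdef
  set B := (dist p s)^2 with hBdef
  set C := (dist q s)^2 with hCdef
  set t : ℝ := (A + B - C)/2 with htdef
  have hkey : (⟪u,s⟫ - ⟪u,p⟫)^2 * A = A*B - t^2 := by
    rw [inner_coord, inner_coord]
    show ((-a1/n * s 0 + a0/n * s 1) - (-a1/n * p 0 + a0/n * p 1))^2 * A = A*B - t^2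
    have hh1 : (-a1/n * s 0 + a0/n * s 1) - (-a1/n * p 0 + a0/n * p 1)
        = (a0*b1 - a1*b0)/n := by rw [hb0, hb1]; field_simp; ring
    rw [hh1]
    have hh2 : ((a0*b1 - a1*b0)/n)^2 * A = (a0*b1 - a1*b0)^2 := by
      rw [hAdef]; field_simp
    rw [hh2, htdef, hA, hB, hC]
    ring
  have hW : W3 u p q s = |⟪u,s⟫ - ⟪u,p⟫| := W3_of_eq u p q s hcq
  have hWnn : 0 ≤ W3 u p q s := W3_nonneg u p q s
  have htnn : 0 ≤ Real.sqrt 3 / 2 * n := by positivity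
  have hApos : 0 < A := by rw [hAdef]; positivity
  have hB0 : 0 ≤ B := by rw [hBdef]; positivity
  have hBA : B ≤ A := by
    rw [hBdef, hAdef]
    exact pow_le_pow_left₀ dist_nonneg h1 2
  have hCA : A + B - 2*t ≤ A := by
    have : A + B - 2*t = C := by rw [htdef]; ring
    rw [this, hCdef, hAdef]
    exact pow_le_pow_left₀ dist_nonneg h2 2
  have hWsq : (W3 u p q s)^2 * A = A*B - t^2 := by
    rw [hW, sq_abs]; exact hkey
  have htsq : (Real.sqrt 3 / 2 * n)^2 * A = 3/4*A^2 := by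
    rw [sqrt3_sq, hAdef]; ring
  refine ⟨u, hu, ?_, ?_, ?_⟩
  · apply le_of_sq hWnn htnn
    have hle : A*B - t^2 ≤ 3/4*A^2 := coreIneq hApos hB0 hBA hCA
    have := hWsq.trans_le (hle.trans_eq htsq.symm)
    exact le_of_mul_le_mul_right this hApos
  · intro hst
    apply lt_of_sq hWnn htnn
    have hst' : B < A ∨ A + B - 2*t < A := by
      have hCeq : A + B - 2*t = C := by rw [htdef]; ring
      rcases hst with h | h
      · left
        rw [hBdef, hAdef]
        exact pow_lt_pow_left₀ h dist_nonneg (by norm_num)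
      · right
        rw [hCeq, hCdef, hAdef]
        exact pow_lt_pow_left₀ h dist_nonneg (by norm_num)
    have hlt : A*B - t^2 < 3/4*A^2 := coreStrict hApos hB0 hBA hCA hst'
    have := hWsq.trans_lt (hlt.trans_eq htsq.symm)
    exact lt_of_mul_lt_mul_right this (le_of_lt hApos)
  · rintro ⟨hps, hqs⟩
    apply eq_of_sq hWnn htnn
    have hBeq : B = A := by rw [hBdef, hAdef, hps]
    have hCeq : A + B - 2*t = A := by
      have : A + B - 2*t = C := by rw [htdef]; ring
      rw [this, hCdef, hAdef, hqs]
    have heq : A*B - t^2 = 3/4*A^2 := coreEq hBeq hCeq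
    have h' := hWsq.trans (heq.trans htsq.symm)
    exact mul_right_cancel₀ (ne_of_gt hApos) h'

/- equilateral triangles: lower bound on every directional width -/

set_option maxHeartbeats 1000000 in
lemma equi_lower (p q s u : E2) (hu : ‖u‖ = 1) (a : ℝ)
    (h1 : dist p q = a) (h2 : dist q s = a) (h3 : dist p s = a) :
    Real.sqrt 3 / 2 * a ≤ W3 u p q s := by
  have ha : 0 ≤ a := h1 ▸ dist_nonneg
  have hu2 : u 0 ^ 2 + u 1 ^ 2 = 1 := by
    have h : Real.sqrt (u 0 ^ 2 + u 1 ^ 2) = 1 := by rw [← norm_coord]; exact hu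
    nlinarith [Real.sq_sqrt (show (0:ℝ) ≤ u 0 ^2 + u 1 ^2 by positivity), h]
  have e1 : (u 0*(q 0 - p 0) + u 1*(q 1 - p 1))^2 + (-u 1*(q 0 - p 0) + u 0*(q 1 - p 1))^2
      = a^2 := by
    have hd : a^2 = (q 0 - p 0)^2 + (q 1 - p 1)^2 := by rw [← h1, dist_sq]; ring
    rw [hd]; nlinarith [hu2]
  have e2 : (u 0*(s 0 - q 0) + u 1*(s 1 - q 1))^2 + (-u 1*(s 0 - q 0) + u 0*(s 1 - q 1))^2
      = a^2 := by
    have hd : a^2 = (s 0 - q 0)^2 + (s 1 - q 1)^2 := by rw [← h2, dist_sq]; ring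
    rw [hd]; nlinarith [hu2]
  have e3 : (u 0*(p 0 - s 0) + u 1*(p 1 - s 1))^2 + (-u 1*(p 0 - s 0) + u 0*(p 1 - s 1))^2
      = a^2 := by
    have hd : a^2 = (p 0 - s 0)^2 + (p 1 - s 1)^2 := by rw [← h3, dist_sq]
    rw [hd]; nlinarith [hu2]
  have key := maxsq (by ring) (by ring) e1 e2 e3
  have hc1 : u 0*(q 0 - p 0) + u 1*(q 1 - p 1) = ⟪u,q⟫ - ⟪u,p⟫ := by
    rw [inner_coord, inner_coord]; ring
  have hc2 : u 0*(s 0 - q 0) + u 1*(s 1 - q 1) = ⟪u,s⟫ - ⟪u,q⟫ := by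
    rw [inner_coord, inner_coord]; ring
  have hc3 : u 0*(p 0 - s 0) + u 1*(p 1 - s 1) = ⟪u,p⟫ - ⟪u,s⟫ := by
    rw [inner_coord, inner_coord]; ring
  rw [hc1, hc2, hc3] at key
  have habs : ∀ c : ℝ, 3/4*a^2 ≤ c^2 → Real.sqrt 3 / 2 * a ≤ |c| := by
    intro c hc
    apply le_of_sq (by positivity) (abs_nonneg c)
    rw [sqrt3_sq, sq_abs]
    exact hc
  rcases le_max_iff.mp key with h | h
  · exact le_trans (habs _ h) (abs_le_W3_pq u p q s)
  rcases le_max_iff.mp h with h' | h'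
  · exact le_trans (habs _ h') (abs_le_W3_qs u p q s)
  · exact le_trans (habs _ h') (abs_le_W3_ps u p q s)

lemma case_bound (p q s : E2) (hpq : p ≠ q) (h1 : dist p s ≤ dist p q)
    (h2 : dist q s ≤ dist p q) (S : Set ℝ) (hbdd : BddBelow S)
    (hmem : ∀ u : E2, ‖u‖ = 1 → W3 u p q s ∈ S) :
    sInf S ≤ Real.sqrt 3 / 2 * dist p q ∧
      (¬ (dist p s = dist p q ∧ dist q s = dist p q) →
        sInf S < Real.sqrt 3 / 2 * dist p q) := by
  obtain ⟨u, hu, hle, hlt, _⟩ := exists_u p q s hpq h1 h2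
  have hin := csInf_le hbdd (hmem u hu)
  refine ⟨hin.trans hle, fun hne => ?_⟩
  have hst : dist p s < dist p q ∨ dist q s < dist p q := by
    by_contra h'
    push_neg at h'
    exact hne ⟨le_antisymm h1 h'.1, le_antisymm h2 h'.2⟩
  exact hin.trans_lt (hlt hst)

end Aux

theorem stmt_4 (p q s : EuclideanSpace ℝ (Fin 2))
    (hind : AffineIndependent ℝ ![p, q, s])
    (T : Set (EuclideanSpace ℝ (Fin 2))) (hT : T = convexHull ℝ {p, q, s}) :
    minWidth T ≤ Real.sqrt 3 / 2 * Metric.diam T ∧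
      (minWidth T = Real.sqrt 3 / 2 * Metric.diam T ↔
        (dist p q = dist q s ∧ dist q s = dist p s)) := by
  have hpq : p ≠ q := by
    have := hind.injective.ne (show (0:Fin 3) ≠ 1 by decide); simpa using this
  have hqs : q ≠ s := by
    have := hind.injective.ne (show (1:Fin 3) ≠ 2 by decide); simpa using this
  have hps : p ≠ s := by
    have := hind.injective.ne (show (0:Fin 3) ≠ 2 by decide); simpa using this
  have key : ∀ u : EuclideanSpace ℝ (Fin 2),
      sSup ((fun x => ⟪u, x⟫) '' T) - sInf ((fun x => ⟪u, x⟫) '' T) = W3 u p q s := by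
    intro u
    rw [hT, image_hull3, sSup_hull3, sInf_hull3, W3]
  have hmw : minWidth T
      = sInf {w : ℝ | ∃ u : EuclideanSpace ℝ (Fin 2), ‖u‖ = 1 ∧ w = W3 u p q s} := by
    unfold minWidth
    congr 1
    ext w
    simp only [Set.mem_setOf_eq, key]
  set S := {w : ℝ | ∃ u : EuclideanSpace ℝ (Fin 2), ‖u‖ = 1 ∧ w = W3 u p q s} with hSdef
  have hbdd : BddBelow S := ⟨0, by rintro w ⟨u, hu, rfl⟩; exact W3_nonneg u p q s⟩
  have hmem : ∀ u : E2, ‖u‖ = 1 → W3 u p q s ∈ S := fun u hu => ⟨u, hu, rfl⟩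
  have hD : Metric.diam T = max (max (dist p q) (dist p s)) (dist q s) := by
    rw [hT, convexHull_diam, Metric.diam_triple]
  have main : sInf S ≤ Real.sqrt 3 / 2 * Metric.diam T ∧
      (¬ (dist p q = dist q s ∧ dist q s = dist p s) →
        sInf S < Real.sqrt 3 / 2 * Metric.diam T) := by
    rcases le_total (dist p s) (dist p q) with h1 | h1
    · rcases le_total (dist q s) (dist p q) with h2 | h2
      · -- pq longest
        have hDval : Metric.diam T = dist p q := by
          rw [hD, max_eq_left h1, max_eq_left h2]
        obtain ⟨hle, hlt⟩ := case_bound p q s hpq h1 h2 S hbdd hmem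
        rw [hDval]
        refine ⟨hle, fun hne => hlt fun hE => hne ?_⟩
        exact ⟨hE.2.symm, hE.2.trans hE.1.symm⟩
      · -- qs longest
        have h1' : dist q p ≤ dist q s := by rw [dist_comm]; exact h2
        have h2' : dist s p ≤ dist q s := by rw [dist_comm]; exact h1.trans h2
        have hDval : Metric.diam T = dist q s := by
          rw [hD, max_eq_left h1, max_eq_right h2]
        obtain ⟨hle, hlt⟩ := case_bound q s p hqs h1' h2'
          S hbdd (fun u hu => by rw [W3_perm1]; exact hmem u hu)
        rw [hDval]
        refine ⟨hle, fun hne => hlt fun hE => hne ?_⟩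
        -- hE : dist q p = dist q s ∧ dist s p = dist q s
        have e2 : dist p q = dist q s := by rw [dist_comm p q]; exact hE.1
        have e1 : dist p s = dist q s := by rw [dist_comm p s]; exact hE.2
        exact ⟨e2, e1.symm⟩
    · rcases le_total (dist q s) (dist p s) with h2 | h2
      · -- ps longest
        have h2' : dist s q ≤ dist p s := by rw [dist_comm]; exact h2
        have hDval : Metric.diam T = dist p s := by
          rw [hD, max_eq_right h1, max_eq_left h2]
        obtain ⟨hle, hlt⟩ := case_bound p s q hps h1 h2'
          S hbdd (fun u hu => by rw [W3_perm2]; exact hmem u hu)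
        rw [hDval]
        refine ⟨hle, fun hne => hlt fun hE => hne ?_⟩
        -- hE : dist p q = dist p s ∧ dist s q = dist p s
        have e1 : dist q s = dist p s := by rw [dist_comm q s]; exact hE.2
        exact ⟨hE.1.trans e1.symm, e1⟩
      · -- qs longest
        have h1' : dist q p ≤ dist q s := by rw [dist_comm]; exact h1.trans h2
        have h2' : dist s p ≤ dist q s := by rw [dist_comm]; exact h2
        have hDval : Metric.diam T = dist q s := by
          rw [hD, max_eq_right h1, max_eq_right h2]
        obtain ⟨hle, hlt⟩ := case_bound q s p hqs h1' h2'
          S hbdd (fun u hu => by rw [W3_perm1]; exact hmem u hu)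
        rw [hDval]
        refine ⟨hle, fun hne => hlt fun hE => hne ?_⟩
        have e2 : dist p q = dist q s := by rw [dist_comm p q]; exact hE.1
        have e1 : dist p s = dist q s := by rw [dist_comm p s]; exact hE.2
        exact ⟨e2, e1.symm⟩
  rw [hmw]
  refine ⟨main.1, ⟨fun hEq => ?_, fun hE => ?_⟩⟩
  · by_contra hne
    exact absurd hEq (ne_of_lt (main.2 hne))
  · -- equilateral case
    have e1 : dist p s = dist p q := (hE.1.trans hE.2).symm
    have e2 : dist q s = dist p q := hE.2.trans (hE.1.trans hE.2).symm
    have hDval : Metric.diam T = dist p q := by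
      rw [hD, e1, e2, max_self, max_self]
    rw [hDval]
    obtain ⟨u, hu, _, _, heq⟩ := exists_u p q s hpq (le_of_eq e1) (le_of_eq e2)
    have hweq := heq ⟨e1, e2⟩
    apply le_antisymm
    · have := csInf_le hbdd (hmem u hu)
      rw [hweq] at this
      exact this
    · refine le_csInf ⟨_, hmem u hu⟩ ?_
      rintro w ⟨v, hv, rfl⟩
      exact equi_lower p q s v hv (dist p q) rfl e2 e1
end

section
/- Let A, B, B' be positive real numbers with B' ≤ B, and set C = BB'/A, b = √(B²+C²), a = bA/B. Then a + b ≤ A + B + C. -/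
open MeasureTheory Metric Set Filter
open scoped Topology RealInnerProductSpace

theorem stmt_10 (A B B' : ℝ) (hA : 0 < A) (hB : 0 < B) (hB' : 0 < B')
    (hBB : B' ≤ B) (C b a : ℝ) (hC : C = B * B' / A)
    (hb : b = Real.sqrt (B ^ 2 + C ^ 2)) (ha : a = b * A / B) :
    a + b ≤ A + B + C := by
  have hCpos : 0 < C := by rw [hC]; positivity
  have hAB : 0 < A + B := by linarith
  have hCA : C * A = B * B' := by rw [hC]; field_simp
  have hsq : B ^ 2 + C ^ 2 ≤ (B * (A + B + C) / (A + B)) ^ 2 := by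
    rw [div_pow, le_div_iff₀ (by positivity)]
    nlinarith [mul_pos hB hCpos, mul_pos hA hCpos, mul_pos (mul_pos hA hB) hCpos,
      mul_le_mul_of_nonneg_right hBB (le_of_lt hAB)]
  have hbb : b ≤ B * (A + B + C) / (A + B) := by
    rw [hb]
    calc Real.sqrt (B ^ 2 + C ^ 2) ≤ Real.sqrt ((B * (A + B + C) / (A + B)) ^ 2) :=
          Real.sqrt_le_sqrt hsq
      _ = B * (A + B + C) / (A + B) := Real.sqrt_sq (by positivity)
  rw [ha]
  rw [le_div_iff₀ hAB] at hbb
  have : b * A / B + b = b * (A + B) / B := by field_simp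
  rw [this, div_le_iff₀ hB]
  nlinarith
end

section
/- The equilateral triangle with vertices (−1/√3, 0), (1 + 1/√3, 0), and (1/2, 1 + √3/2) is lattice-free and satisfies p(T) − 2D(T) = 1 + 2/√3. -/
open MeasureTheory Metric Set Filter
open scoped Topology RealInnerProductSpace

namespace Stmt17Aux

noncomputable section

def pA : EuclideanSpace ℝ (Fin 2) := !₂[-(1 / Real.sqrt 3), 0]
def pB : EuclideanSpace ℝ (Fin 2) := !₂[1 + 1 / Real.sqrt 3, 0]
def pC : EuclideanSpace ℝ (Fin 2) := !₂[1 / 2, 1 + Real.sqrt 3 / 2]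

def S : Set (EuclideanSpace ℝ (Fin 2)) :=
  {x | 0 ≤ x 1 ∧ -1 ≤ Real.sqrt 3 * x 0 - x 1 ∧ Real.sqrt 3 * x 0 + x 1 ≤ Real.sqrt 3 + 1}

def O : Set (EuclideanSpace ℝ (Fin 2)) :=
  {x | 0 < x 1 ∧ -1 < Real.sqrt 3 * x 0 - x 1 ∧ Real.sqrt 3 * x 0 + x 1 < Real.sqrt 3 + 1}

lemma r_pos : 0 < Real.sqrt 3 := Real.sqrt_pos.mpr (by norm_num)
lemma r_sq : Real.sqrt 3 ^ 2 = 3 := Real.sq_sqrt (by norm_num)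
lemma r_inv : Real.sqrt 3 * (1 / Real.sqrt 3) = 1 := by
  field_simp

@[simp] lemma pA0 : pA 0 = -(1 / Real.sqrt 3) := rfl
@[simp] lemma pA1 : pA 1 = 0 := rfl
@[simp] lemma pB0 : pB 0 = 1 + 1 / Real.sqrt 3 := rfl
@[simp] lemma pB1 : pB 1 = 0 := rfl
@[simp] lemma pC0 : pC 0 = 1 / 2 := rfl
@[simp] lemma pC1 : pC 1 = 1 + Real.sqrt 3 / 2 := rfl

lemma pA_mem : pA ∈ S := by
  refine ⟨le_refl _, ?_, ?_⟩ <;>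
    simp only [pA0, pA1, mul_neg, r_inv] <;> nlinarith [r_pos]

lemma pB_mem : pB ∈ S := by
  refine ⟨le_refl _, ?_, ?_⟩ <;>
    simp only [pB0, pB1, mul_add, r_inv] <;> nlinarith [r_pos]

lemma pC_mem : pC ∈ S := by
  refine ⟨by simp; positivity, ?_, ?_⟩ <;>
    simp only [pC0, pC1] <;> nlinarith [r_pos, r_sq]

lemma convex_S : Convex ℝ S := by
  intro x hx y hy a b ha hb hab
  obtain ⟨hx1, hx2, hx3⟩ := hx
  obtain ⟨hy1, hy2, hy3⟩ := hy
  refine ⟨?_, ?_, ?_⟩ <;>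
    simp only [PiLp.add_apply, PiLp.smul_apply, smul_eq_mul] <;> nlinarith


lemma hull_eq : convexHull ℝ ({pA, pB, pC} : Set (EuclideanSpace ℝ (Fin 2))) = S := by
  apply le_antisymm
  · exact convexHull_min (by
      rintro x (rfl | rfl | rfl)
      exacts [pA_mem, pB_mem, pC_mem]) convex_S
  · intro x hx
    obtain ⟨h1, h2, h3⟩ := hx
    have hr0 : 0 < Real.sqrt 3 := r_pos
    set r := Real.sqrt 3 with hrdef
    set u := x 0 with hu
    set v := x 1 with hv
    have hr2 : (0:ℝ) < r + 2 := by linarith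
    have hsum : (∑ i, (![(r + 1 - r * u - v) / (r + 2), (r * u - v + 1) / (r + 2),
        2 * v / (r + 2)]) i) = 1 := by
      simp only [Fin.sum_univ_three, Matrix.cons_val_zero, Matrix.cons_val_one, Matrix.head_cons,
        Matrix.cons_val_two, Matrix.tail_cons]
      field_simp
      ring
    have key := Finset.centerMass_mem_convexHull (Finset.univ : Finset (Fin 3))
      (w := ![(r + 1 - r * u - v) / (r + 2), (r * u - v + 1) / (r + 2), 2 * v / (r + 2)])
      (s := ({pA, pB, pC} : Set (EuclideanSpace ℝ (Fin 2)))) (z := ![pA, pB, pC]) ?_ (by rw [hsum]; exact one_pos) ?_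
    · rw [Finset.centerMass_eq_of_sum_1 _ _ hsum] at key
      convert key using 1
      refine PiLp.ext fun j => ?_
      have : (∑ i, (![(r + 1 - r * u - v) / (r + 2), (r * u - v + 1) / (r + 2),
          2 * v / (r + 2)]) i • (![pA, pB, pC]) i) j
          = ∑ i, (![(r + 1 - r * u - v) / (r + 2), (r * u - v + 1) / (r + 2),
          2 * v / (r + 2)]) i * (![pA, pB, pC]) i j := by
        simp [Fin.sum_univ_three, PiLp.add_apply, PiLp.smul_apply]
      rw [this]
      fin_cases j <;>
        simp only [Fin.sum_univ_three, Matrix.cons_val_zero, Matrix.cons_val_one,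
          Matrix.head_cons, Matrix.cons_val_two, Matrix.tail_cons, Fin.isValue,
          Fin.zero_eta, Fin.mk_one, pA0, pA1, pB0, pB1, pC0, pC1] <;> (field_simp; ring)
    · intro i _
      fin_cases i <;>
        simp only [Matrix.cons_val_zero, Matrix.cons_val_one, Matrix.head_cons,
          Matrix.cons_val_two, Matrix.tail_cons] <;>
        exact div_nonneg (by linarith) (by linarith)
    · intro i _
      fin_cases i <;> simp [Set.mem_insert_iff]

def f2 : EuclideanSpace ℝ (Fin 2) →L[ℝ] ℝ :=
  Real.sqrt 3 • EuclideanSpace.proj 0 - EuclideanSpace.proj 1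

def f3 : EuclideanSpace ℝ (Fin 2) →L[ℝ] ℝ :=
  Real.sqrt 3 • EuclideanSpace.proj 0 + EuclideanSpace.proj 1

@[simp] lemma f2_apply (x : EuclideanSpace ℝ (Fin 2)) :
    f2 x = Real.sqrt 3 * x 0 - x 1 := by
  simp [f2, smul_eq_mul]

@[simp] lemma f3_apply (x : EuclideanSpace ℝ (Fin 2)) :
    f3 x = Real.sqrt 3 * x 0 + x 1 := by
  simp [f3, smul_eq_mul]

lemma f2_surj : Function.Surjective f2 := by
  intro y
  refine ⟨!₂[y / Real.sqrt 3, 0], ?_⟩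
  have hr0 := r_pos
  rw [f2_apply]
  show Real.sqrt 3 * (y / Real.sqrt 3) - 0 = y
  field_simp
  ring

lemma f3_surj : Function.Surjective f3 := by
  intro y
  refine ⟨!₂[y / Real.sqrt 3, 0], ?_⟩
  have hr0 := r_pos
  rw [f3_apply]
  show Real.sqrt 3 * (y / Real.sqrt 3) + 0 = y
  field_simp
  ring

lemma isOpen_O : IsOpen O := by
  have h1 : IsOpen {x : EuclideanSpace ℝ (Fin 2) | 0 < x 1} := by
    have : ({x : EuclideanSpace ℝ (Fin 2) | 0 < x 1})
        = (EuclideanSpace.proj (1 : Fin 2)) ⁻¹' Ioi 0 := rfl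
    rw [this]
    exact (EuclideanSpace.proj (1 : Fin 2)).continuous.isOpen_preimage _ isOpen_Ioi
  have h2 : IsOpen (f2 ⁻¹' Ioi (-1)) := f2.continuous.isOpen_preimage _ isOpen_Ioi
  have h3 : IsOpen (f3 ⁻¹' Iio (Real.sqrt 3 + 1)) := f3.continuous.isOpen_preimage _ isOpen_Iio
  have : O = {x : EuclideanSpace ℝ (Fin 2) | 0 < x 1} ∩
      (f2 ⁻¹' Ioi (-1) ∩ f3 ⁻¹' Iio (Real.sqrt 3 + 1)) := by
    ext x
    simp only [O, mem_setOf_eq, mem_inter_iff, mem_preimage, f2_apply, f3_apply,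
      mem_Ioi, mem_Iio]
  rw [this]
  exact h1.inter (h2.inter h3)

lemma interior_S : interior S = O := by
  apply Set.Subset.antisymm
  · intro x hx
    refine ⟨?_, ?_, ?_⟩
    · have h : interior S ⊆ interior {y : EuclideanSpace ℝ (Fin 2) | 0 ≤ y 1} :=
        interior_mono (fun y hy => hy.1)
      have hx' := h hx
      rw [interior_halfSpace 2 0 1] at hx'
      exact hx'
    · have h : interior S ⊆ interior (f2 ⁻¹' Ici (-1)) := by
        apply interior_mono
        intro y hy
        simpa [mem_preimage, mem_Ici] using hy.2.1
      have hx' := h hx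
      rw [f2.interior_preimage f2_surj, interior_Ici] at hx'
      simpa using hx'
    · have h : interior S ⊆ interior (f3 ⁻¹' Iic (Real.sqrt 3 + 1)) := by
        apply interior_mono
        intro y hy
        simpa [mem_preimage, mem_Iic] using hy.2.2
      have hx' := h hx
      rw [f3.interior_preimage f3_surj, interior_Iic] at hx'
      simpa using hx'
  · exact interior_maximal (fun y hy => ⟨hy.1.le, hy.2.1.le, hy.2.2.le⟩) isOpen_O

lemma closed_S : IsClosed S := by
  rw [← hull_eq]
  exact ((Set.toFinite _).isCompact_convexHull (𝕜 := ℝ)).isClosed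

lemma frontier_S : frontier S = S \ O := by
  rw [closed_S.frontier_eq, interior_S]

lemma segAB_eq : segment ℝ pA pB = {x ∈ S | x 1 = 0} := by
  have hr0 := r_pos
  apply Set.Subset.antisymm
  · rintro x ⟨a, b, ha, hb, hab, rfl⟩
    refine ⟨convex_S pA_mem pB_mem ha hb hab, ?_⟩
    simp [PiLp.add_apply, PiLp.smul_apply]
  · rintro x ⟨⟨h1, h2, h3⟩, hv⟩
    set r := Real.sqrt 3 with hrdef
    set u := x 0 with hu
    rw [hv] at h2 h3
    have hr2 : (0:ℝ) < r + 2 := by linarith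
    refine ⟨1 - (r * u + 1) / (r + 2), (r * u + 1) / (r + 2), ?_, ?_, by ring, ?_⟩
    · have : (r * u + 1) / (r + 2) ≤ 1 := by
        rw [div_le_one hr2]; linarith
      linarith
    · exact div_nonneg (by linarith) (by linarith)
    · refine PiLp.ext fun j => ?_
      have happ : ((1 - (r * u + 1) / (r + 2)) • pA + ((r * u + 1) / (r + 2)) • pB) j
          = (1 - (r * u + 1) / (r + 2)) * pA j + ((r * u + 1) / (r + 2)) * pB j := by
        simp [PiLp.add_apply, PiLp.smul_apply]
      rw [happ]
      fin_cases j
      · show _ = u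
        simp only [Fin.zero_eta, Fin.mk_one, pA0, pB0]
        field_simp
        ring
      · show _ = x 1
        rw [hv]; simp

lemma segAC_eq : segment ℝ pA pC = {x ∈ S | Real.sqrt 3 * x 0 - x 1 = -1} := by
  have hr0 := r_pos
  apply Set.Subset.antisymm
  · rintro x ⟨a, b, ha, hb, hab, rfl⟩
    refine ⟨convex_S pA_mem pC_mem ha hb hab, ?_⟩
    simp only [PiLp.add_apply, PiLp.smul_apply, smul_eq_mul, pA0, pA1, pC0, pC1]
    nlinarith [r_sq, r_inv]
  · rintro x ⟨⟨h1, h2, h3⟩, hv⟩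
    set r := Real.sqrt 3 with hrdef
    set u := x 0 with hu
    set v := x 1 with hvv
    have hr2 : (0:ℝ) < r + 2 := by linarith
    have hru : r * u = v - 1 := by linarith
    have huu : u = (v - 1) / r := by
      rw [eq_div_iff hr0.ne']; linarith [hru]
    refine ⟨1 - 2 * v / (r + 2), 2 * v / (r + 2), ?_, ?_, by ring, ?_⟩
    · have : 2 * v / (r + 2) ≤ 1 := by
        rw [div_le_one hr2]; linarith
      linarith
    · exact div_nonneg (by linarith) (by linarith)
    · refine PiLp.ext fun j => ?_
      have happ : ((1 - 2 * v / (r + 2)) • pA + (2 * v / (r + 2)) • pC) j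
          = (1 - 2 * v / (r + 2)) * pA j + (2 * v / (r + 2)) * pC j := by
        simp [PiLp.add_apply, PiLp.smul_apply]
      rw [happ]
      fin_cases j
      · show _ = u
        rw [huu]
        simp only [Fin.zero_eta, Fin.mk_one, pA0, pC0]
        field_simp
        ring
      · show _ = v
        simp only [Fin.zero_eta, Fin.mk_one, pA1, pC1]
        field_simp
        ring

lemma segBC_eq : segment ℝ pB pC = {x ∈ S | Real.sqrt 3 * x 0 + x 1 = Real.sqrt 3 + 1} := by
  have hr0 := r_pos
  apply Set.Subset.antisymm
  · rintro x ⟨a, b, ha, hb, hab, rfl⟩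
    refine ⟨convex_S pB_mem pC_mem ha hb hab, ?_⟩
    simp only [PiLp.add_apply, PiLp.smul_apply, smul_eq_mul, pB0, pB1, pC0, pC1]
    nlinarith [r_sq, r_inv]
  · rintro x ⟨⟨h1, h2, h3⟩, hv⟩
    set r := Real.sqrt 3 with hrdef
    set u := x 0 with hu
    set v := x 1 with hvv
    have hr2 : (0:ℝ) < r + 2 := by linarith
    have hru : r * u = r + 1 - v := by linarith
    have huu : u = (r + 1 - v) / r := by
      rw [eq_div_iff hr0.ne']; linarith [hru]
    refine ⟨1 - 2 * v / (r + 2), 2 * v / (r + 2), ?_, ?_, by ring, ?_⟩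
    · have : 2 * v / (r + 2) ≤ 1 := by
        rw [div_le_one hr2]; linarith
      linarith
    · exact div_nonneg (by linarith) (by linarith)
    · refine PiLp.ext fun j => ?_
      have happ : ((1 - 2 * v / (r + 2)) • pB + (2 * v / (r + 2)) • pC) j
          = (1 - 2 * v / (r + 2)) * pB j + (2 * v / (r + 2)) * pC j := by
        simp [PiLp.add_apply, PiLp.smul_apply]
      rw [happ]
      fin_cases j
      · show _ = u
        rw [huu]
        simp only [Fin.zero_eta, Fin.mk_one, pB0, pC0]
        field_simp
        ring
      · show _ = v
        simp only [Fin.zero_eta, Fin.mk_one, pB1, pC1]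
        field_simp
        ring

lemma frontier_decomp : frontier S
    = segment ℝ pA pB ∪ segment ℝ pA pC ∪ segment ℝ pB pC := by
  rw [frontier_S, segAB_eq, segAC_eq, segBC_eq]
  ext x
  constructor
  · rintro ⟨⟨h1, h2, h3⟩, hO⟩
    have hO' : ¬(0 < x 1 ∧ -1 < Real.sqrt 3 * x 0 - x 1 ∧
        Real.sqrt 3 * x 0 + x 1 < Real.sqrt 3 + 1) := hO
    rw [not_and_or, not_and_or] at hO'
    rcases hO' with h | h | h
    · exact Or.inl (Or.inl ⟨⟨h1, h2, h3⟩, le_antisymm (not_lt.mp h) h1⟩)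
    · exact Or.inl (Or.inr ⟨⟨h1, h2, h3⟩, le_antisymm (not_lt.mp h) h2⟩)
    · exact Or.inr ⟨⟨h1, h2, h3⟩, le_antisymm h3 (not_lt.mp h)⟩
  · rintro ((⟨hS, h⟩ | ⟨hS, h⟩) | ⟨hS, h⟩) <;>
      refine ⟨hS, fun hOx => ?_⟩ <;>
      · obtain ⟨o1, o2, o3⟩ := hOx
        linarith

lemma pt_ext {x p : EuclideanSpace ℝ (Fin 2)} (h0 : x 0 = p 0) (h1 : x 1 = p 1) : x = p :=
  PiLp.ext fun j => by fin_cases j <;> assumption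

lemma inter_AB : segment ℝ pA pB ∩ (segment ℝ pA pC ∪ segment ℝ pB pC)
    ⊆ ({pA, pB} : Set (EuclideanSpace ℝ (Fin 2))) := by
  have hr0 := r_pos
  rintro x ⟨hab, hrest⟩
  rw [segAB_eq] at hab
  obtain ⟨-, hv⟩ := hab
  rcases hrest with hac | hbc
  · rw [segAC_eq] at hac
    obtain ⟨-, he⟩ := hac
    rw [hv] at he
    refine Set.mem_insert_iff.mpr (Or.inl (pt_ext ?_ (by rw [pA1, hv])))
    rw [pA0]
    field_simp
    linarith
  · rw [segBC_eq] at hbc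
    obtain ⟨-, he⟩ := hbc
    rw [hv] at he
    refine Set.mem_insert_iff.mpr (Or.inr (Set.mem_singleton_iff.mpr
      (pt_ext ?_ (by rw [pB1, hv]))))
    rw [pB0]
    field_simp
    linarith

lemma inter_C : segment ℝ pA pC ∩ segment ℝ pB pC
    ⊆ ({pC} : Set (EuclideanSpace ℝ (Fin 2))) := by
  have hr0 := r_pos
  rintro x ⟨hac, hbc⟩
  rw [segAC_eq] at hac
  rw [segBC_eq] at hbc
  obtain ⟨-, he1⟩ := hac
  obtain ⟨-, he2⟩ := hbc
  have hv : x 1 = 1 + Real.sqrt 3 / 2 := by linarith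
  have hu : x 0 = 1 / 2 := by
    have h : Real.sqrt 3 * x 0 = Real.sqrt 3 * (1 / 2) := by linarith
    exact mul_left_cancel₀ hr0.ne' h
  exact Set.mem_singleton_iff.mpr (pt_ext (by rw [pC0]; exact hu) (by rw [pC1]; exact hv))

lemma measSeg (p q : EuclideanSpace ℝ (Fin 2)) :
    NullMeasurableSet (segment ℝ p q) (μH[1]) := by
  have hc : IsCompact (segment ℝ p q) := by
    rw [← convexHull_pair]
    exact (Set.toFinite _).isCompact_convexHull (𝕜 := ℝ)
  exact hc.isClosed.measurableSet.nullMeasurableSet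

lemma msingle (p : EuclideanSpace ℝ (Fin 2)) :
    μH[1] ({p} : Set (EuclideanSpace ℝ (Fin 2))) = 0 := by
  have h := hausdorffMeasure_segment (E := EuclideanSpace ℝ (Fin 2)) p p
  rwa [segment_same, edist_self] at h

lemma mpair (p q : EuclideanSpace ℝ (Fin 2)) :
    μH[1] ({p, q} : Set (EuclideanSpace ℝ (Fin 2))) = 0 := by
  refine le_antisymm ?_ (zero_le)
  rw [Set.insert_eq]
  calc μH[1] ({p} ∪ ({q} : Set (EuclideanSpace ℝ (Fin 2))))
      ≤ μH[1] {p} + μH[1] {q} := measure_union_le _ _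
    _ = 0 := by rw [msingle, msingle, add_zero]

lemma dist_AB : dist pA pB = 1 + 2 / Real.sqrt 3 := by
  have hr0 := r_pos
  rw [EuclideanSpace.dist_eq, Fin.sum_univ_two]
  simp only [pA0, pA1, pB0, pB1, Real.dist_eq, sq_abs]
  rw [show (-(1 / Real.sqrt 3) - (1 + 1 / Real.sqrt 3)) ^ 2 + ((0:ℝ) - 0) ^ 2
      = (1 + 2 / Real.sqrt 3) ^ 2 by ring]
  exact Real.sqrt_sq (by positivity)

lemma r_cube : Real.sqrt 3 ^ 3 = 3 * Real.sqrt 3 := by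
  rw [pow_succ, r_sq]

lemma r_four : Real.sqrt 3 ^ 4 = 9 := by
  rw [show (4:ℕ) = 2 * 2 from rfl, pow_mul, r_sq]
  norm_num

lemma dist_AC : dist pA pC = 1 + 2 / Real.sqrt 3 := by
  have hr0 := r_pos
  rw [EuclideanSpace.dist_eq, Fin.sum_univ_two]
  simp only [pA0, pA1, pC0, pC1, Real.dist_eq, sq_abs]
  have key : (-(1 / Real.sqrt 3) - 1 / 2) ^ 2 + ((0:ℝ) - (1 + Real.sqrt 3 / 2)) ^ 2
      = (1 + 2 / Real.sqrt 3) ^ 2 := by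
    have h2 := r_sq
    have h3 := r_cube
    have h4 := r_four
    field_simp
    ring_nf
    linarith
  rw [key]
  exact Real.sqrt_sq (by positivity)

lemma dist_BC : dist pB pC = 1 + 2 / Real.sqrt 3 := by
  have hr0 := r_pos
  rw [EuclideanSpace.dist_eq, Fin.sum_univ_two]
  simp only [pB0, pB1, pC0, pC1, Real.dist_eq, sq_abs]
  have key : (1 + 1 / Real.sqrt 3 - 1 / 2) ^ 2 + ((0:ℝ) - (1 + Real.sqrt 3 / 2)) ^ 2
      = (1 + 2 / Real.sqrt 3) ^ 2 := by
    have h2 := r_sq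
    have h3 := r_cube
    have h4 := r_four
    field_simp
    ring_nf
    linarith
  rw [key]
  exact Real.sqrt_sq (by positivity)

lemma frontier_measure : μH[1] (frontier S)
    = ENNReal.ofReal (3 * (1 + 2 / Real.sqrt 3)) := by
  have hr0 := r_pos
  have hs : (0:ℝ) ≤ 1 + 2 / Real.sqrt 3 := by positivity
  have d1 : AEDisjoint (μH[1]) (segment ℝ pA pB)
      (segment ℝ pA pC ∪ segment ℝ pB pC) :=
    measure_mono_null inter_AB (mpair pA pB)
  have d2 : AEDisjoint (μH[1]) (segment ℝ pA pC) (segment ℝ pB pC) :=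
    measure_mono_null inter_C (msingle pC)
  rw [frontier_decomp, union_assoc,
    measure_union₀ ((measSeg pA pC).union (measSeg pB pC)) d1,
    measure_union₀ (measSeg pB pC) d2,
    hausdorffMeasure_segment, hausdorffMeasure_segment, hausdorffMeasure_segment,
    edist_dist, edist_dist, edist_dist, dist_AB, dist_AC, dist_BC,
    ← ENNReal.ofReal_add hs hs, ← ENNReal.ofReal_add hs (by positivity)]
  congr 1
  ring

lemma diam_S : Metric.diam S = 1 + 2 / Real.sqrt 3 := by
  rw [← hull_eq, convexHull_diam, Metric.diam_triple, dist_AB, dist_AC, dist_BC,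
    max_self, max_self]
end
end Stmt17Aux

theorem stmt_17 (T : Set (EuclideanSpace ℝ (Fin 2)))
    (hT : T = convexHull ℝ
      {(!₂[-(1 / Real.sqrt 3), 0] : EuclideanSpace ℝ (Fin 2)),
        !₂[1 + 1 / Real.sqrt 3, 0], !₂[1 / 2, 1 + Real.sqrt 3 / 2]}) :
    LatticeFree T ∧
      perim T - 2 * Metric.diam T = 1 + 2 / Real.sqrt 3 := by
  have hpts : ({(!₂[-(1 / Real.sqrt 3), 0] : EuclideanSpace ℝ (Fin 2)),
      !₂[1 + 1 / Real.sqrt 3, 0], !₂[1 / 2, 1 + Real.sqrt 3 / 2]} :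
      Set (EuclideanSpace ℝ (Fin 2)))
      = {Stmt17Aux.pA, Stmt17Aux.pB, Stmt17Aux.pC} := rfl
  have hTS : T = Stmt17Aux.S := by rw [hT, hpts]; exact Stmt17Aux.hull_eq
  constructor
  · unfold LatticeFree
    intro m n hmem
    rw [hTS, Stmt17Aux.interior_S] at hmem
    obtain ⟨h1, h2, h3⟩ := hmem
    simp only [WithLp.ofLp_toLp, Matrix.cons_val_zero, Matrix.cons_val_one, Matrix.head_cons] at h1 h2 h3
    have hr0 := Stmt17Aux.r_pos
    have hn : (0:ℤ) < n := by exact_mod_cast h1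
    have hn1 : (1:ℝ) ≤ (n:ℝ) := by exact_mod_cast hn
    have hm0 : (0:ℝ) < (m:ℝ) := by nlinarith
    have hm : (0:ℤ) < m := by exact_mod_cast hm0
    have hm1 : (1:ℝ) ≤ (m:ℝ) := by exact_mod_cast hm
    nlinarith
  · have hper : perim T = 3 * (1 + 2 / Real.sqrt 3) := by
      unfold perim
      rw [hTS, Stmt17Aux.frontier_measure,
        ENNReal.toReal_ofReal (by positivity)]
    rw [hper, hTS, Stmt17Aux.diam_S]
    ring
end
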